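/- For integers α ≥ 2, k ≥ 2, and n ≥ α·k, the number of stable k-subsets of {1,...,n} is at least (1 − 1/(α−1)²) · C(n-k+1, k). -/

import Mathlib

open Finset

attribute [local instance] Classical.propDecidable

/-- `A` is a stable subset of `{1,...,n}`: no two cyclically consecutive elements. -/
def Stable (n : ℕ) (A : Finset ℕ) : Prop :=
  (∀ i ∈ A, i + 1 ∉ A) ∧ ¬(1 ∈ A ∧ n ∈ A)

/-- The collection of stable `k`-subsets of `{1,...,n}`. -/
noncomputable def stableSets (n k : ℕ) : Finset (Finset ℕ) :=
  ((Finset.Icc 1 n).powersetCard k).filter (fun A => Stable n A)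

namespace StableAux

noncomputable def rk (s : Finset ℕ) (b : ℕ) : ℕ := (s.filter (· < b)).card

lemma rk_lt_card {s : Finset ℕ} {b : ℕ} (hb : b ∈ s) : rk s b < s.card :=
  card_lt_card ⟨filter_subset _ _, fun hsub => absurd ((mem_filter.1 (hsub hb)).2) (lt_irrefl b)⟩

lemma rk_le {s : Finset ℕ} {a : ℕ} : rk s a ≤ a := by
  have h : s.filter (· < a) ⊆ range a := fun x hx => mem_range.2 (mem_filter.1 hx).2
  simpa [rk] using card_le_card h

lemma rk_strict {s : Finset ℕ} {a b : ℕ} (ha : a ∈ s) (hab : a < b) :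
    rk s a + 1 ≤ rk s b := by
  have h : insert a (s.filter (· < a)) ⊆ s.filter (· < b) := by
    intro x hx
    rcases mem_insert.1 hx with rfl | hx
    · exact mem_filter.2 ⟨ha, hab⟩
    · rcases mem_filter.1 hx with ⟨h1, h2⟩
      exact mem_filter.2 ⟨h1, h2.trans hab⟩
  have h2 := card_le_card h
  have hna : a ∉ s.filter (· < a) := fun h => absurd (mem_filter.1 h).2 (lt_irrefl a)
  rw [card_insert_of_notMem hna] at h2
  simpa [rk] using h2

lemma rk_image {s : Finset ℕ} {φ : ℕ → ℕ} (hφ : StrictMonoOn φ s) {b : ℕ} (hb : b ∈ s) :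
    rk (s.image φ) (φ b) = rk s b := by
  unfold rk
  have h : (s.image φ).filter (· < φ b) = (s.filter (· < b)).image φ := by
    ext x
    simp only [mem_filter, mem_image]
    constructor
    · rintro ⟨⟨a, ha, rfl⟩, hlt⟩
      exact ⟨a, ⟨ha, (hφ.lt_iff_lt ha hb).1 hlt⟩, rfl⟩
    · rintro ⟨a, ⟨ha, hlt⟩, rfl⟩
      exact ⟨⟨a, ha, rfl⟩, (hφ.lt_iff_lt ha hb).2 hlt⟩
  rw [h, card_image_of_injOn (hφ.injOn.mono (fun x hx => (mem_filter.1 hx).1))]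

lemma g_strict (s : Finset ℕ) : StrictMonoOn (fun b => b + rk s b) s := by
  intro a ha b _ hab
  have h := rk_strict ha hab
  simp only
  omega

lemma g_gap {s : Finset ℕ} {a b : ℕ} (ha : a ∈ s) (hab : a < b) :
    a + rk s a + 2 ≤ b + rk s b := by
  have := rk_strict ha hab; omega

lemma f_leftinv (s : Finset ℕ) :
    (s.image (fun b => b + rk s b)).image
      (fun c => c - rk (s.image (fun b => b + rk s b)) c) = s := by
  rw [image_image]
  refine Eq.trans (image_congr ?_) image_id
  intro b hb
  simp only [Function.comp, id_eq]
  rw [rk_image (g_strict s) hb]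
  omega

lemma L1 (t j : ℕ) :
    Nat.choose (t + 1) j ≤
      (((Icc 1 (t + j)).powersetCard j).filter (fun A => ∀ i ∈ A, i + 1 ∉ A)).card := by
  have hcard : ((Icc 1 (t+1)).powersetCard j).card = Nat.choose (t+1) j := by
    rw [card_powersetCard, Nat.card_Icc]
    norm_num
  rw [← hcard]
  apply card_le_card_of_injOn (fun s => s.image (fun b => b + rk s b))
  · intro B hB
    rw [mem_coe, mem_powersetCard] at hB
    obtain ⟨hBsub, hBcard⟩ := hB
    rw [mem_coe, mem_filter, mem_powersetCard]
    refine ⟨⟨?_, ?_⟩, ?_⟩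
    · intro x hx
      rw [mem_image] at hx
      obtain ⟨b, hb, rfl⟩ := hx
      have h1 := mem_Icc.1 (hBsub hb)
      have h2 : rk B b < B.card := rk_lt_card hb
      rw [mem_Icc]
      omega
    · rw [card_image_of_injOn (g_strict B).injOn, hBcard]
    · intro x hx hx1
      rw [mem_image] at hx hx1
      obtain ⟨a, ha, hae⟩ := hx
      obtain ⟨b, hb, hbe⟩ := hx1
      rcases lt_trichotomy a b with h | rfl | h
      · have := g_gap ha h; omega
      · omega
      · have := g_gap hb h; omega
  · intro s hs t' ht' h
    have e1 := f_leftinv s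
    have e2 := f_leftinv t'
    simp only at h
    rw [← e1, ← e2, h]

lemma noconsec_gap {C : Finset ℕ} (hC : ∀ i ∈ C, i + 1 ∉ C) {a b : ℕ}
    (ha : a ∈ C) (hb : b ∈ C) (hab : a < b) : a + 2 ≤ b := by
  rcases Nat.lt_or_ge (a+1) b with h | h
  · omega
  · have he : b = a + 1 := by omega
    exact absurd (he ▸ hb) (hC a ha)

lemma rk_gap {C : Finset ℕ} (hC : ∀ i ∈ C, i + 1 ∉ C) {a b : ℕ}
    (ha : a ∈ C) (hb : b ∈ C) (hab : a < b) : rk C b + a < rk C a + b := by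
  classical
  set D := C.filter (fun x => a ≤ x ∧ x < b) with hD
  have hdis0 : Disjoint (C.filter (· < a)) D := by
    rw [disjoint_left]
    intro x hx hx2
    have h1 := (mem_filter.1 hx).2
    have h2 := (mem_filter.1 hx2).2
    omega
  have hsplit : rk C b = rk C a + D.card := by
    unfold rk
    rw [← card_union_of_disjoint hdis0]
    congr 1
    ext x
    simp only [mem_union, mem_filter, hD]
    constructor
    · rintro ⟨hx, hlt⟩
      rcases Nat.lt_or_ge x a with h | h
      · exact Or.inl ⟨hx, h⟩
      · exact Or.inr ⟨hx, h, hlt⟩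
    · rintro (⟨hx, h⟩ | ⟨hx, h1, h2⟩)
      · exact ⟨hx, h.trans hab⟩
      · exact ⟨hx, h2⟩
  have hDsub : D ∪ D.image (· + 1) ⊆ Icc a b := by
    intro x hx
    rcases mem_union.1 hx with h | h
    · have := (mem_filter.1 h).2; rw [mem_Icc]; omega
    · rw [mem_image] at h; obtain ⟨y, hy, rfl⟩ := h
      have := (mem_filter.1 hy).2; rw [mem_Icc]; omega
  have hdis : Disjoint D (D.image (· + 1)) := by
    rw [disjoint_left]
    intro x hx hx2
    rw [mem_image] at hx2
    obtain ⟨y, hy, rfl⟩ := hx2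
    exact hC y (mem_filter.1 hy).1 (mem_filter.1 hx).1
  have hcards : 2 * D.card ≤ b - a + 1 := by
    have h1 := card_le_card hDsub
    rw [card_union_of_disjoint hdis, card_image_of_injective _ (add_left_injective 1),
      Nat.card_Icc] at h1
    omega
  have h2 : a + 2 ≤ b := noconsec_gap hC ha hb hab
  omega

lemma h_strict {C : Finset ℕ} (hC : ∀ i ∈ C, i + 1 ∉ C) :
    StrictMonoOn (fun c => c - rk C c) C := by
  intro a ha b hb hab
  have h1 := rk_gap hC ha hb hab
  have h2 : rk C a ≤ a := rk_le
  have h3 : rk C b ≤ b := rk_le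
  simp only
  omega

lemma h_leftinv {C : Finset ℕ} (hC : ∀ i ∈ C, i + 1 ∉ C) :
    (C.image (fun c => c - rk C c)).image
      (fun x => x + rk (C.image (fun c => c - rk C c)) x) = C := by
  rw [image_image]
  refine Eq.trans (image_congr ?_) image_id
  intro c hc
  simp only [Function.comp, id_eq]
  rw [rk_image (h_strict hC) hc]
  have : rk C c ≤ c := rk_le
  omega

lemma L2 (t j : ℕ) :
    (((Icc 1 (t + j)).powersetCard j).filter (fun A => ∀ i ∈ A, i + 1 ∉ A)).card ≤
      Nat.choose (t + 1) j := by
  have hcard : ((Icc 1 (t+1)).powersetCard j).card = Nat.choose (t+1) j := by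
    rw [card_powersetCard, Nat.card_Icc]
    norm_num
  rw [← hcard]
  apply card_le_card_of_injOn (fun C => C.image (fun c => c - rk C c))
  · intro C hCmem
    rw [mem_coe, mem_filter, mem_powersetCard] at hCmem
    obtain ⟨⟨hsub, hcardC⟩, hnc⟩ := hCmem
    rw [mem_coe, mem_powersetCard]
    constructor
    · intro x hx
      rw [mem_image] at hx
      obtain ⟨c, hc, rfl⟩ := hx
      have hc1 := mem_Icc.1 (hsub hc)
      have hlow : rk C c < c := by
        have hss : C.filter (· < c) ⊆ Icc 1 (c-1) := by
          intro x hx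
          have hx1 := mem_filter.1 hx
          have := mem_Icc.1 (hsub hx1.1)
          rw [mem_Icc]; omega
        have h := card_le_card hss
        rw [Nat.card_Icc] at h
        have : rk C c = (C.filter (· < c)).card := rfl
        omega
      have hne : C.Nonempty := ⟨c, hc⟩
      have hmax : C.max' hne ∈ C := C.max'_mem hne
      have hrkmax : rk C (C.max' hne) = j - 1 := by
        have hfe : C.filter (· < C.max' hne) = C.erase (C.max' hne) := by
          ext x
          simp only [mem_filter, mem_erase]
          constructor
          · rintro ⟨h1, h2⟩; exact ⟨Nat.ne_of_lt h2, h1⟩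
          · rintro ⟨h1, h2⟩
            exact ⟨h2, lt_of_le_of_ne (C.le_max' x h2) h1⟩
        unfold rk
        rw [hfe, card_erase_of_mem hmax, hcardC]
      have hle : c - rk C c ≤ C.max' hne - rk C (C.max' hne) := by
        rcases eq_or_lt_of_le (C.le_max' c hc) with heq | hlt
        · rw [heq]
        · exact le_of_lt (h_strict hnc hc hmax hlt)
      have hmaxle : C.max' hne ≤ t + j := (mem_Icc.1 (hsub hmax)).2
      have hj : 1 ≤ j := by
        rw [← hcardC]; exact card_pos.2 ⟨c, hc⟩
      rw [mem_Icc, hrkmax] at *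
      constructor
      · omega
      · omega
    · rw [card_image_of_injOn (h_strict hnc).injOn, hcardC]
  · intro C1 h1 C2 h2 heq
    have e1 := h_leftinv (mem_filter.1 h1).2
    have e2 := h_leftinv (mem_filter.1 h2).2
    simp only at heq
    rw [← e1, ← e2, heq]

end StableAux

open StableAux

theorem stmt_3 (α n k : ℕ) (hα : 2 ≤ α) (hk : 2 ≤ k) (hn : α * k ≤ n) :
    (1 - 1 / ((α : ℝ) - 1) ^ 2) * (Nat.choose (n - k + 1) k : ℝ)
      ≤ ((stableSets n k).card : ℝ) := by
  have hn2k : 2 * k ≤ n := le_trans (Nat.mul_le_mul_right k hα) hn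
  set L := ((Icc 1 n).powersetCard k).filter (fun A => ∀ i ∈ A, i + 1 ∉ A) with hLdef
  set bad := L.filter (fun A => 1 ∈ A ∧ n ∈ A) with hbaddef
  have hsplit : bad.card + (stableSets n k).card = L.card := by
    have hst : stableSets n k = L.filter (fun A => ¬(1 ∈ A ∧ n ∈ A)) := by
      ext X
      simp only [stableSets, hLdef, mem_filter]
      simp only [Stable]; tauto
    rw [hst, hbaddef]
    exact card_filter_add_card_filter_not _
  have hL : Nat.choose (n - k + 1) k ≤ L.card := by
    have h := L1 (n - k) k
    have he1 : n - k + k = n := by omega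
    rw [he1] at h
    exact h
  have hbad : bad.card ≤ Nat.choose (n - k - 1) (k - 2) := by
    have hupper := L2 (n - k - 2) (k - 2)
    have he : n - k - 2 + (k - 2) = n - 4 := by omega
    have he2 : n - k - 2 + 1 = n - k - 1 := by omega
    rw [he, he2] at hupper
    refine le_trans ?_ hupper
    apply card_le_card_of_injOn (fun A => ((A.erase 1).erase n).image (fun x => x - 2))
    · intro A hA
      rw [mem_coe, hbaddef, mem_filter, hLdef, mem_filter, mem_powersetCard] at hA
      obtain ⟨⟨⟨hsub, hcard⟩, hnc⟩, h1A, hnA⟩ := hA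
      have h2A : 2 ∉ A := hnc 1 h1A
      have hn1A : n - 1 ∉ A := by
        intro h
        have hcons := hnc (n - 1) h
        have : n - 1 + 1 = n := by omega
        rw [this] at hcons
        exact hcons hnA
      have hmemE : ∀ x ∈ (A.erase 1).erase n, x ∈ A ∧ 3 ≤ x ∧ x ≤ n - 2 := by
        intro x hx
        have hx1 := mem_erase.1 hx
        have hx2 := mem_erase.1 hx1.2
        have hxA := hx2.2
        have hb := mem_Icc.1 (hsub hxA)
        refine ⟨hxA, ?_, ?_⟩
        · rcases Nat.lt_or_ge x 3 with h | h
          · interval_cases x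
            · omega
            · exact absurd hxA (by simpa using hx2.1 rfl |>.elim)
            · exact absurd hxA h2A
          · exact h
        · have : x ≠ n := hx1.1
          have : x ≠ n - 1 := fun he => hn1A (he ▸ hxA)
          omega
      rw [mem_coe, mem_filter, mem_powersetCard]
      refine ⟨⟨?_, ?_⟩, ?_⟩
      · intro x hx
        rw [mem_image] at hx
        obtain ⟨a, ha, rfl⟩ := hx
        have := hmemE a ha
        rw [mem_Icc]
        omega
      · have hinj : Set.InjOn (fun x => x - 2) ↑((A.erase 1).erase n) := by
          intro a ha b hb hab
          have h1 := hmemE a (mem_coe.1 ha)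
          have h2 := hmemE b (mem_coe.1 hb)
          simp only at hab
          omega
        have hnmem : n ∈ A.erase 1 := mem_erase.2 ⟨by omega, hnA⟩
        rw [card_image_of_injOn hinj, card_erase_of_mem hnmem, card_erase_of_mem h1A, hcard]
        omega
      · intro x hx hx1
        rw [mem_image] at hx hx1
        obtain ⟨a, ha, hae⟩ := hx
        obtain ⟨b, hb, hbe⟩ := hx1
        have h1 := hmemE a ha
        have h2 := hmemE b hb
        have hba : b = a + 1 := by omega
        exact hnc a h1.1 (hba ▸ h2.1)
    · intro A hA B hB heq
      rw [mem_coe] at hA hB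
      rw [hbaddef, mem_filter, hLdef, mem_filter, mem_powersetCard] at hA hB
      obtain ⟨⟨⟨hsubA, hcardA⟩, hncA⟩, h1A, hnA⟩ := hA
      obtain ⟨⟨⟨hsubB, hcardB⟩, hncB⟩, h1B, hnB⟩ := hB
      have key : ∀ (X : Finset ℕ), X ⊆ Icc 1 n → (∀ i ∈ X, i + 1 ∉ X) → 1 ∈ X → n ∈ X →
          insert 1 (insert n ((((X.erase 1).erase n).image (fun x => x - 2)).image (fun x => x + 2))) = X := by
        intro X hsub hnc h1X hnX
        have h2X : 2 ∉ X := hnc 1 h1X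
        have hn1X : n - 1 ∉ X := by
          intro h
          have hcons := hnc (n - 1) h
          have he : n - 1 + 1 = n := by omega
          rw [he] at hcons
          exact hcons hnX
        have hn4 : 4 ≤ n := by omega
        have hmemE : ∀ x ∈ (X.erase 1).erase n, 2 ≤ x := by
          intro x hx
          have hx1 := mem_erase.1 hx
          have hx2 := mem_erase.1 hx1.2
          have hb := mem_Icc.1 (hsub hx2.2)
          have : x ≠ 1 := hx2.1
          omega
        rw [image_image]
        have : ((X.erase 1).erase n).image ((fun x => x + 2) ∘ (fun x => x - 2)) = (X.erase 1).erase n := by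
          refine Eq.trans (image_congr ?_) image_id
          intro x hx
          have := hmemE x hx
          simp only [Function.comp, id_eq]
          omega
        rw [this]
        rw [insert_erase, insert_erase h1X]
        rw [mem_erase]
        exact ⟨by omega, hnX⟩
      have eA := key A hsubA hncA h1A hnA
      have eB := key B hsubB hncB h1B hnB
      simp only at heq
      rw [← eA, ← eB, heq]
  -- numeric ℕ inequality
  have hkey : (α - 1)^2 * Nat.choose (n - k - 1) (k - 2) ≤ Nat.choose (n - k + 1) k := by
    set m := n - k - 1 with hm
    have hm2 : m + 2 = n - k + 1 := by omega
    have id1 : (m + 1) * Nat.choose m (k - 2) = Nat.choose (m + 1) (k - 1) * (k - 1) := by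
      have h := Nat.add_one_mul_choose_eq m (k - 2)
      have hk2 : k - 2 + 1 = k - 1 := by omega
      rw [hk2] at h
      exact h
    have id2 : (m + 2) * Nat.choose (m + 1) (k - 1) = Nat.choose (m + 2) k * k := by
      have h := Nat.add_one_mul_choose_eq (m + 1) (k - 1)
      have hk1 : k - 1 + 1 = k := by omega
      rw [hk1] at h
      exact h
    have comb : (m + 2) * ((m + 1) * Nat.choose m (k - 2)) = Nat.choose (m + 2) k * (k * (k - 1)) := by
      rw [id1, ← mul_assoc, id2]
      ring
    have h1 : (α - 1) * k ≤ m + 1 := by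
      have he : (α - 1) * k + k = α * k := by
        have : α - 1 + 1 = α := by omega
        calc (α - 1) * k + k = (α - 1 + 1) * k := by ring
          _ = α * k := by rw [this]
      omega
    have h2 : (α - 1) * (k - 1) ≤ m + 1 :=
      le_trans (Nat.mul_le_mul_left _ (by omega)) h1
    have hsize : (α - 1)^2 * (k * (k - 1)) ≤ (m + 2) * (m + 1) := by
      calc (α - 1)^2 * (k * (k - 1)) = ((α - 1) * k) * ((α - 1) * (k - 1)) := by ring
        _ ≤ (m + 1) * (m + 1) := Nat.mul_le_mul h1 h2
        _ ≤ (m + 2) * (m + 1) := Nat.mul_le_mul_right _ (by omega)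
    have hmul : (α - 1)^2 * Nat.choose m (k - 2) * (k * (k - 1)) ≤ Nat.choose (m + 2) k * (k * (k - 1)) := by
      calc (α - 1)^2 * Nat.choose m (k - 2) * (k * (k - 1))
          = ((α - 1)^2 * (k * (k - 1))) * Nat.choose m (k - 2) := by ring
        _ ≤ ((m + 2) * (m + 1)) * Nat.choose m (k - 2) := Nat.mul_le_mul_right _ hsize
        _ = (m + 2) * ((m + 1) * Nat.choose m (k - 2)) := by ring
        _ = Nat.choose (m + 2) k * (k * (k - 1)) := comb
    have hpos : 0 < k * (k - 1) := by
      have : 1 ≤ k - 1 := by omega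
      exact Nat.mul_pos (by omega) this
    have := Nat.le_of_mul_le_mul_right hmul hpos
    rwa [hm2] at this
  -- move to ℝ
  have hαR : (2:ℝ) ≤ (α : ℝ) := by exact_mod_cast hα
  have hposR : (0:ℝ) < ((α:ℝ) - 1)^2 := by nlinarith
  have hkeyR : ((α:ℝ) - 1)^2 * (Nat.choose (n - k - 1) (k - 2) : ℝ) ≤ (Nat.choose (n - k + 1) k : ℝ) := by
    have hcast : ((α - 1 : ℕ) : ℝ) = (α : ℝ) - 1 := by
      have : 1 ≤ α := by omega
      push_cast [this]
      ring
    calc ((α:ℝ) - 1)^2 * (Nat.choose (n - k - 1) (k - 2) : ℝ)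
        = (((α - 1)^2 * Nat.choose (n - k - 1) (k - 2) : ℕ) : ℝ) := by
          push_cast [hcast]
          ring
      _ ≤ (Nat.choose (n - k + 1) k : ℝ) := by exact_mod_cast hkey
  have hcards : (Nat.choose (n - k + 1) k : ℝ) - (Nat.choose (n - k - 1) (k - 2) : ℝ)
      ≤ ((stableSets n k).card : ℝ) := by
    have h1 : Nat.choose (n - k + 1) k ≤ (stableSets n k).card + Nat.choose (n - k - 1) (k - 2) := by
      omega
    have := (Nat.cast_le (α := ℝ)).2 h1
    push_cast at this
    linarith
  have hdiv : (Nat.choose (n - k - 1) (k - 2) : ℝ) ≤ (Nat.choose (n - k + 1) k : ℝ) / ((α:ℝ) - 1)^2 := by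
    rw [le_div_iff₀ hposR]
    linarith
  have hexp : (1 - 1 / ((α : ℝ) - 1) ^ 2) * (Nat.choose (n - k + 1) k : ℝ)
      = (Nat.choose (n - k + 1) k : ℝ) - (Nat.choose (n - k + 1) k : ℝ) / ((α:ℝ) - 1)^2 := by
    field_simp
  rw [hexp]
  linarith
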